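/- arXiv:2508.14516 — 7 statements merged into one kernel-verified Lean document; each statement's English description precedes it below -/
import Mathlib

section
/- Let g, h : 2^E → ℝ≥0 be monotone with g(∅) = h(∅) = 0, with generic submodularity ratio at least γ ∈ (0,1] and curvature at most c ∈ (0,1], and consider any double-greedy run for g and h. Let S ⊆ E with m := |S| < n and S \ F_m ≠ ∅. Then φ_{m+1} ≥ (c/|S \ F_m|)·(γ·h(S) − Σ_{i=1}^{m} φ_i) + ((1−c)/|S \ F_m|)·(γ·h(S) − Σ_{i : e*_i ∈ F_m ∩ S} φ_i). -/
namespace IncDec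

open Finset

variable {α : Type*} [Fintype α] [DecidableEq α]

/-- Marginal gain `F(x | S) = F(S ∪ {x}) - F(S)`. -/
def marg (F : Finset α → ℝ) (x : α) (S : Finset α) : ℝ := F (insert x S) - F S

/-- Marginal gain of a set: `F(T | S) = F(T ∪ S) - F(S)`. -/
def margSet (F : Finset α → ℝ) (T S : Finset α) : ℝ := F (T ∪ S) - F S

/-- Monotone set function. -/
def Mono (F : Finset α → ℝ) : Prop := ∀ ⦃S T : Finset α⦄, S ⊆ T → F S ≤ F T

/-- Nonnegative set function. -/
def Nonneg (F : Finset α → ℝ) : Prop := ∀ S : Finset α, 0 ≤ F S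

/-- The combined objective `f(S) = h(S) + g(E \ S)`. -/
def fObj (g h : Finset α → ℝ) (S : Finset α) : ℝ := h S + g Sᶜ

/-- `F` has generic submodularity ratio at least `γ`. -/
def GenSubRatioGE (F : Finset α → ℝ) (γ : ℝ) : Prop :=
  ∀ A B : Finset α, ∀ e : α, marg F e A ≥ γ * marg F e (A ∪ B)

/-- `F` has curvature at most `c`. -/
def CurvatureLE (F : Finset α → ℝ) (c : ℝ) : Prop :=
  ∀ A B : Finset α, ∀ e : α, e ∉ B → marg F e (A ∪ B) ≥ (1 - c) * marg F e A

/-- Submodular set function. -/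
def Submodular (F : Finset α → ℝ) : Prop :=
  ∀ ⦃S T : Finset α⦄, S ⊆ T → ∀ e : α, e ∉ T → marg F e T ≤ marg F e S

/-- Modular set function. -/
def Modular (F : Finset α → ℝ) : Prop := ∀ S : Finset α, F S = ∑ e ∈ S, F {e}

/-- Gross substitute set function. -/
def GrossSubstitute (F : Finset α → ℝ) : Prop :=
  Submodular F ∧
    ∀ A B : Finset α, Disjoint A B → 2 ≤ B.card → ∀ b ∈ B,
      ∃ b' ∈ B.erase b,
        marg F b A + margSet F (B.erase b) A ≤ marg F b' A + margSet F (B.erase b') A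

/-- The set of ratios appearing in the definition of the curvature. -/
def curvRatioSet (F : Finset α → ℝ) : Set ℝ :=
  {r | ∃ A B : Finset α, ∃ e : α, e ∉ B ∧ 0 < marg F e A ∧ r = marg F e (A ∪ B) / marg F e A}

/-- `F` has curvature exactly `c` (with `min ∅ := 1`, i.e. `c = 0` if the ratio set is empty). -/
def CurvatureEq (F : Finset α → ℝ) (c : ℝ) : Prop :=
  (¬ (curvRatioSet F).Nonempty ∧ c = 0) ∨ IsLeast (curvRatioSet F) (1 - c)

/-- The set of ratios appearing in the definition of the generic submodularity ratio. -/
def gsRatioSet (F : Finset α → ℝ) : Set ℝ :=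
  {r | ∃ A B : Finset α, ∃ e : α, 0 < marg F e (A ∪ B) ∧ r = marg F e A / marg F e (A ∪ B)}

/-- `F` has generic submodularity ratio exactly `γ` (with `min ∅ := 1`). -/
def GenSubRatioEq (F : Finset α → ℝ) (γ : ℝ) : Prop :=
  (¬ (gsRatioSet F).Nonempty ∧ γ = 1) ∨ IsLeast (gsRatioSet F) γ

/-- The singleton-based ratio set `{F(e | E \ {e}) / F({e}) : e ∈ E, F({e}) > 0}`. -/
def curvSingletonSet (F : Finset α → ℝ) : Set ℝ :=
  {r | ∃ e : α, 0 < F {e} ∧ r = marg F e ({e}ᶜ) / F {e}}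

/-- A run of the double-greedy algorithm for `g` and `h`: distinct elements `elt 0, …,
`elt (n-1)` enumerating `E` (`elt i` is the element `e*_{i+1}` of the paper), together with the
sets `H i`, `G i` (for `0 ≤ i ≤ n`), each new element maximizing the larger marginal gain and
being added to the side realizing it. -/
structure DGRun (α : Type*) [Fintype α] [DecidableEq α] (g h : Finset α → ℝ) where
  elt : ℕ → α
  H : ℕ → Finset α
  G : ℕ → Finset α
  H0 : H 0 = ∅
  G0 : G 0 = ∅
  mem : ∀ i < Fintype.card α, elt i ∉ H i ∪ G i
  distinct : ∀ i < Fintype.card α, ∀ j < Fintype.card α, elt i = elt j → i = j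
  enum : ∀ x : α, ∃ i < Fintype.card α, elt i = x
  greedy : ∀ i < Fintype.card α, ∀ x : α, x ∉ H i ∪ G i →
      max (marg g x (G i)) (marg h x (H i)) ≤ max (marg g (elt i) (G i)) (marg h (elt i) (H i))
  step : ∀ i < Fintype.card α,
      (H (i + 1) = insert (elt i) (H i) ∧ G (i + 1) = G i ∧
        marg g (elt i) (G i) ≤ marg h (elt i) (H i)) ∨
      (G (i + 1) = insert (elt i) (G i) ∧ H (i + 1) = H i ∧
        marg h (elt i) (H i) ≤ marg g (elt i) (G i))

/-- `phi R i` is the increment `φ_{i+1}` of the double-greedy run `R`. -/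
def phi {g h : Finset α → ℝ} (R : DGRun α g h) (i : ℕ) : ℝ :=
  max (marg g (R.elt i) (R.G i)) (marg h (R.elt i) (R.H i))


lemma marg_nonneg' {F : Finset α → ℝ} (hF : Mono F) (x : α) (A : Finset α) :
    0 ≤ marg F x A := sub_nonneg.mpr (hF (Finset.subset_insert x A))

lemma phi_nonneg' {g h : Finset α → ℝ} (hhm : Mono h) (R : DGRun α g h) (i : ℕ) :
    0 ≤ phi R i := le_trans (marg_nonneg' hhm _ _) (le_max_right _ _)

lemma DGRun.H_subset {g h : Finset α → ℝ} (R : DGRun α g h) {i j : ℕ}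
    (hij : i ≤ j) (hj : j ≤ Fintype.card α) : R.H i ⊆ R.H j := by
  induction j with
  | zero => simp [Nat.le_zero.mp hij]
  | succ j ih =>
    have hstep : R.H j ⊆ R.H (j + 1) := by
      rcases R.step j (lt_of_lt_of_le (Nat.lt_succ_self j) hj) with ⟨h1, _, _⟩ | ⟨_, h1, _⟩
      · rw [h1]; exact Finset.subset_insert _ _
      · rw [h1]
    rcases Nat.lt_or_ge i (j + 1) with hlt | hge
    · exact (ih (Nat.lt_succ_iff.mp hlt) (le_trans (Nat.le_succ j) hj)).trans hstep
    · have : i = j + 1 := le_antisymm hij hge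
      rw [this]

lemma DGRun.G_subset {g h : Finset α → ℝ} (R : DGRun α g h) {i j : ℕ}
    (hij : i ≤ j) (hj : j ≤ Fintype.card α) : R.G i ⊆ R.G j := by
  induction j with
  | zero => simp [Nat.le_zero.mp hij]
  | succ j ih =>
    have hstep : R.G j ⊆ R.G (j + 1) := by
      rcases R.step j (lt_of_lt_of_le (Nat.lt_succ_self j) hj) with ⟨_, h1, _⟩ | ⟨h1, _, _⟩
      · rw [h1]
      · rw [h1]; exact Finset.subset_insert _ _
    rcases Nat.lt_or_ge i (j + 1) with hlt | hge
    · exact (ih (Nat.lt_succ_iff.mp hlt) (le_trans (Nat.le_succ j) hj)).trans hstep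
    · have : i = j + 1 := le_antisymm hij hge
      rw [this]

theorem stmt9 (g h : Finset α → ℝ) (c γ : ℝ)
    (hgm : Mono g) (hhm : Mono h) (hg0 : Nonneg g) (hh0 : Nonneg h)
    (hge : g ∅ = 0) (hhe : h ∅ = 0)
    (hc0 : 0 < c) (hc1 : c ≤ 1) (hγ0 : 0 < γ) (hγ1 : γ ≤ 1)
    (hgC : CurvatureLE g c) (hhC : CurvatureLE h c)
    (hgγ : GenSubRatioGE g γ) (hhγ : GenSubRatioGE h γ)
    (R : DGRun α g h) (S : Finset α) (m : ℕ) (hm : S.card = m)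
    (hmn : m < Fintype.card α) (hne : (S \ (R.H m ∪ R.G m)).Nonempty) :
    phi R m ≥
      (c / ((S \ (R.H m ∪ R.G m)).card : ℝ)) *
          (γ * h S - ∑ i ∈ Finset.range m, phi R i) +
        ((1 - c) / ((S \ (R.H m ∪ R.G m)).card : ℝ)) *
          (γ * h S -
            ∑ i ∈ (Finset.range m).filter (fun i => R.elt i ∈ (R.H m ∪ R.G m) ∩ S),
              phi R i) := by
  classical
  have hφ : ∀ i, 0 ≤ phi R i := phi_nonneg' hhm R
  -- γ times the marginal at U i is at most phi i
  have F4 : ∀ i, γ * marg h (R.elt i) (R.H i ∪ (R.G i ∩ S)) ≤ phi R i := by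
    intro i
    have h1 := hhγ (R.H i) (R.G i ∩ S) (R.elt i)
    exact le_trans h1 (le_max_right _ _)
  -- Lemma 1 : curvature chain
  have lem1 : ∀ k, k ≤ m →
      h S + (1 - c) * ∑ i ∈ (Finset.range k).filter
          (fun i => R.elt i ∈ R.H (i+1) ∧ R.elt i ∉ S),
          marg h (R.elt i) (R.H i ∪ (R.G i ∩ S)) ≤ h (S ∪ R.H k) := by
    intro k
    induction k with
    | zero => intro _; simp [R.H0]
    | succ k ih =>
      intro hk1
      have hkm : k < m := hk1
      have hkn : k < Fintype.card α := hkm.trans hmn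
      have ih' := ih hkm.le
      have hmem := R.mem k hkn
      have hmemH : R.elt k ∉ R.H k := fun hx => hmem (Finset.mem_union_left _ hx)
      rcases R.step k hkn with ⟨hH, hG, _⟩ | ⟨hG, hH, _⟩
      · by_cases hs : R.elt k ∈ S
        · rw [Finset.range_add_one, Finset.filter_insert, if_neg (by simp [hs]), hH]
          have heq : S ∪ insert (R.elt k) (R.H k) = S ∪ R.H k := by
            rw [Finset.union_insert, Finset.insert_eq_self.mpr (Finset.mem_union_left _ hs)]
          rw [heq]; exact ih'
        · have hPk : R.elt k ∈ R.H (k+1) ∧ R.elt k ∉ S :=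
            ⟨hH ▸ Finset.mem_insert_self _ _, hs⟩
          rw [Finset.range_add_one, Finset.filter_insert, if_pos hPk,
            Finset.sum_insert (by simp)]
          have hnotin : R.elt k ∉ S ∪ R.H k := by
            simp only [Finset.mem_union]; rintro (hx | hx)
            exacts [hs hx, hmemH hx]
          have hcurv := hhC (R.H k ∪ (R.G k ∩ S)) (S ∪ R.H k) (R.elt k) hnotin
          have hUeq : (R.H k ∪ (R.G k ∩ S)) ∪ (S ∪ R.H k) = S ∪ R.H k := by
            apply Finset.union_eq_right.mpr
            intro x hx
            rcases Finset.mem_union.mp hx with hx | hx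
            · exact Finset.mem_union_right _ hx
            · exact Finset.mem_union_left _ (Finset.mem_inter.mp hx).2
          rw [hUeq] at hcurv
          have hexp : h (S ∪ R.H (k+1)) = marg h (R.elt k) (S ∪ R.H k) + h (S ∪ R.H k) := by
            rw [hH, Finset.union_insert]; simp only [marg]; ring
          rw [hexp]
          have hmnn := marg_nonneg' hhm (R.elt k) (R.H k ∪ (R.G k ∩ S))
          nlinarith [ih', hcurv]
      · have hPk : ¬ (R.elt k ∈ R.H (k+1) ∧ R.elt k ∉ S) := by
          rw [hH]; intro hx; exact hmemH hx.1
        rw [Finset.range_add_one, Finset.filter_insert, if_neg hPk, hH]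
        exact ih'
  -- Lemma 2 : generic submodularity chain over U
  have lem2 : ∀ k, k ≤ m →
      γ * h (R.H k ∪ (R.G k ∩ S)) ≤
        (∑ i ∈ (Finset.range k).filter (fun i => R.elt i ∈ S), phi R i) +
        γ * ∑ i ∈ (Finset.range k).filter
            (fun i => R.elt i ∈ R.H (i+1) ∧ R.elt i ∉ S),
            marg h (R.elt i) (R.H i ∪ (R.G i ∩ S)) := by
    intro k
    induction k with
    | zero => intro _; simp [R.H0, R.G0, hhe]
    | succ k ih =>
      intro hk1
      have hkm : k < m := hk1
      have hkn : k < Fintype.card α := hkm.trans hmn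
      have ih' := ih hkm.le
      have hmem := R.mem k hkn
      have hmemH : R.elt k ∉ R.H k := fun hx => hmem (Finset.mem_union_left _ hx)
      have hmemG : R.elt k ∉ R.G k := fun hx => hmem (Finset.mem_union_right _ hx)
      have hins : ∀ _hU : R.H (k+1) ∪ (R.G (k+1) ∩ S)
            = insert (R.elt k) (R.H k ∪ (R.G k ∩ S)),
          γ * h (R.H (k+1) ∪ (R.G (k+1) ∩ S)) =
            γ * marg h (R.elt k) (R.H k ∪ (R.G k ∩ S)) +
            γ * h (R.H k ∪ (R.G k ∩ S)) := by
        intro hU; rw [hU]; simp only [marg]; ring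
      rcases R.step k hkn with ⟨hH, hG, _⟩ | ⟨hG, hH, _⟩
      · have hU : R.H (k+1) ∪ (R.G (k+1) ∩ S)
            = insert (R.elt k) (R.H k ∪ (R.G k ∩ S)) := by
          rw [hH, hG, Finset.insert_union]
        rw [hins hU]
        by_cases hs : R.elt k ∈ S
        · rw [Finset.range_add_one, Finset.filter_insert, if_pos hs,
            Finset.sum_insert (by simp), Finset.filter_insert, if_neg (by simp [hs])]
          linarith [F4 k, ih']
        · rw [Finset.range_add_one, Finset.filter_insert, if_neg hs,
            Finset.filter_insert, if_pos ⟨hH ▸ Finset.mem_insert_self _ _, hs⟩,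
            Finset.sum_insert (by simp), mul_add]
          linarith [ih']
      · by_cases hs : R.elt k ∈ S
        · have hU : R.H (k+1) ∪ (R.G (k+1) ∩ S)
              = insert (R.elt k) (R.H k ∪ (R.G k ∩ S)) := by
            rw [hH, hG, Finset.insert_inter_of_mem hs, Finset.union_insert]
          rw [hins hU]
          rw [Finset.range_add_one, Finset.filter_insert, if_pos hs,
            Finset.sum_insert (by simp), Finset.filter_insert, if_neg (by simp [hs])]
          linarith [F4 k, ih']
        · have hU : R.H (k+1) ∪ (R.G (k+1) ∩ S) = R.H k ∪ (R.G k ∩ S) := by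
            rw [hH, hG, Finset.insert_inter_of_notMem hs]
          have hPk : ¬ (R.elt k ∈ R.H (k+1) ∧ R.elt k ∉ S) := by
            rw [hH]; intro hx; exact hmemH hx.1
          rw [hU, Finset.range_add_one, Finset.filter_insert, if_neg hs,
            Finset.filter_insert, if_neg hPk]
          exact ih'
  -- Lemma 3 : generic submodularity chain over the remaining elements
  have lem3 : ∀ T : Finset α,
      γ * (h ((R.H m ∪ (R.G m ∩ S)) ∪ T) - h (R.H m ∪ (R.G m ∩ S))) ≤
        ∑ e ∈ T, marg h e (R.H m) := by
    intro T
    induction T using Finset.induction_on with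
    | empty => simp
    | @insert a T ha ih =>
      have hgs := hhγ (R.H m) ((R.H m ∪ (R.G m ∩ S)) ∪ T) a
      have hEq : R.H m ∪ ((R.H m ∪ (R.G m ∩ S)) ∪ T) = (R.H m ∪ (R.G m ∩ S)) ∪ T := by
        apply Finset.union_eq_right.mpr
        intro x hx
        exact Finset.mem_union_left _ (Finset.mem_union_left _ hx)
      rw [hEq] at hgs
      rw [Finset.union_insert, Finset.sum_insert ha]
      have hexp : γ * (h (insert a ((R.H m ∪ (R.G m ∩ S)) ∪ T)) - h (R.H m ∪ (R.G m ∩ S)))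
          = γ * marg h a ((R.H m ∪ (R.G m ∩ S)) ∪ T) +
            γ * (h ((R.H m ∪ (R.G m ∩ S)) ∪ T) - h (R.H m ∪ (R.G m ∩ S))) := by
        simp only [marg]; ring
      rw [hexp]
      linarith [ih, hgs]
  -- facts about D
  have hDcard : (0:ℝ) < ((S \ (R.H m ∪ R.G m)).card : ℝ) := by
    exact_mod_cast Finset.card_pos.mpr hne
  have hSplit : S ∪ R.H m = (R.H m ∪ (R.G m ∩ S)) ∪ (S \ (R.H m ∪ R.G m)) := by
    ext x
    simp only [Finset.mem_union, Finset.mem_inter, Finset.mem_sdiff]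
    tauto
  have hDphi : ∑ e ∈ S \ (R.H m ∪ R.G m), marg h e (R.H m) ≤
      ((S \ (R.H m ∪ R.G m)).card : ℝ) * phi R m := by
    calc ∑ e ∈ S \ (R.H m ∪ R.G m), marg h e (R.H m)
        ≤ ∑ _e ∈ S \ (R.H m ∪ R.G m), phi R m := by
          apply Finset.sum_le_sum
          intro e he
          have he' := Finset.mem_sdiff.mp he
          exact le_trans (le_max_right _ _) (R.greedy m hmn e he'.2)
      _ = ((S \ (R.H m ∪ R.G m)).card : ℝ) * phi R m := by
          rw [Finset.sum_const, nsmul_eq_mul]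
  have h3 := lem3 (S \ (R.H m ∪ R.G m))
  rw [← hSplit] at h3
  -- key inequality
  have h1 := mul_le_mul_of_nonneg_left (lem1 m le_rfl) hγ0.le
  have h2 := lem2 m le_rfl
  have hPQ : γ * ∑ i ∈ (Finset.range m).filter
        (fun i => R.elt i ∈ R.H (i+1) ∧ R.elt i ∉ S),
        marg h (R.elt i) (R.H i ∪ (R.G i ∩ S)) ≤
      ∑ i ∈ (Finset.range m).filter (fun i => R.elt i ∉ S), phi R i := by
    rw [Finset.mul_sum]
    refine le_trans (Finset.sum_le_sum (fun i _ => F4 i)) ?_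
    apply Finset.sum_le_sum_of_subset_of_nonneg
    · intro i hi
      simp only [Finset.mem_filter] at hi ⊢
      exact ⟨hi.1, hi.2.2⟩
    · intro i _ _; exact hφ i
  have e1 : γ * h S + γ * ((1 - c) * ∑ i ∈ (Finset.range m).filter
        (fun i => R.elt i ∈ R.H (i+1) ∧ R.elt i ∉ S),
        marg h (R.elt i) (R.H i ∪ (R.G i ∩ S))) ≤ γ * h (S ∪ R.H m) := by
    rw [← mul_add]; exact h1
  have e2 := mul_le_mul_of_nonneg_left hPQ hc0.le
  have key : γ * h S ≤
      (∑ i ∈ (Finset.range m).filter (fun i => R.elt i ∈ S), phi R i) +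
      c * (∑ i ∈ (Finset.range m).filter (fun i => R.elt i ∉ S), phi R i) +
      ((S \ (R.H m ∪ R.G m)).card : ℝ) * phi R m := by
    nlinarith [e1, e2, h2, h3, hDphi]
  -- rewrite the filter in the goal
  have hfilter : (Finset.range m).filter (fun i => R.elt i ∈ (R.H m ∪ R.G m) ∩ S)
      = (Finset.range m).filter (fun i => R.elt i ∈ S) := by
    apply Finset.filter_congr
    intro i hi
    have him : i < m := Finset.mem_range.mp hi
    have hin : R.elt i ∈ R.H m ∪ R.G m := by
      have hsub1 : R.H (i+1) ⊆ R.H m := R.H_subset (by omega) hmn.le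
      have hsub2 : R.G (i+1) ⊆ R.G m := R.G_subset (by omega) hmn.le
      rcases R.step i (him.trans hmn) with ⟨h1, _, _⟩ | ⟨h1, _, _⟩
      · exact Finset.mem_union_left _ (hsub1 (h1 ▸ Finset.mem_insert_self _ _))
      · exact Finset.mem_union_right _ (hsub2 (h1 ▸ Finset.mem_insert_self _ _))
    simp [Finset.mem_inter, hin]
  have hsum : (∑ i ∈ (Finset.range m).filter (fun i => R.elt i ∈ S), phi R i) +
      (∑ i ∈ (Finset.range m).filter (fun i => R.elt i ∉ S), phi R i) =
      ∑ i ∈ Finset.range m, phi R i :=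
    Finset.sum_filter_add_sum_filter_not _ _ _
  have hsum' : c * (∑ i ∈ (Finset.range m).filter (fun i => R.elt i ∈ S), phi R i) +
      c * (∑ i ∈ (Finset.range m).filter (fun i => R.elt i ∉ S), phi R i) =
      c * ∑ i ∈ Finset.range m, phi R i := by
    rw [← hsum]; ring
  rw [ge_iff_le, hfilter, div_mul_eq_mul_div, div_mul_eq_mul_div, ← add_div,
    div_le_iff₀ hDcard]
  nlinarith [key, hsum, hsum']

end IncDec
end

section
/- Let g, h : 2^E → ℝ≥0 be monotone and submodular with g(∅) = h(∅) = 0, and consider any double-greedy run for g and h. Then g(E) = f(H_0) ≤ f(H_1) ≤ … ≤ f(H_n), h(E) = f(E \ G_0) ≤ f(E \ G_1) ≤ … ≤ f(E \ G_n), and f(H_n) = f(E \ G_n). -/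
namespace IncDec

open Finset

variable {α : Type*} [Fintype α] [DecidableEq α]

lemma compl_insert_eq (e : α) (S : Finset α) (he : e ∉ S) :
    Sᶜ = insert e ((insert e S)ᶜ) := by
  ext x
  simp only [Finset.mem_compl, Finset.mem_insert, not_or]
  by_cases hx : x = e
  · subst hx; simp [he]
  · tauto

lemma DGRun.disj {g h : Finset α → ℝ} (R : DGRun α g h) :
    ∀ i ≤ Fintype.card α, Disjoint (R.H i) (R.G i) := by
  intro i
  induction i with
  | zero => intro _; simp [R.H0, R.G0]
  | succ i ih =>
    intro hi
    have hi' : i < Fintype.card α := hi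
    have hd := ih (le_of_lt hi')
    have hm := R.mem i hi'
    simp only [Finset.mem_union, not_or] at hm
    rcases R.step i hi' with ⟨h1, h2, _⟩ | ⟨h1, h2, _⟩
    · rw [h1, h2, Finset.disjoint_insert_left]; exact ⟨hm.2, hd⟩
    · rw [h1, h2, Finset.disjoint_insert_right]; exact ⟨hm.1, hd⟩

lemma DGRun.subset_succ {g h : Finset α → ℝ} (R : DGRun α g h)
    (i : ℕ) (hi : i < Fintype.card α) :
    R.H i ⊆ R.H (i + 1) ∧ R.G i ⊆ R.G (i + 1) := by
  rcases R.step i hi with ⟨h1, h2, _⟩ | ⟨h1, h2, _⟩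
  · rw [h1, h2]; exact ⟨Finset.subset_insert _ _, subset_rfl⟩
  · rw [h1, h2]; exact ⟨subset_rfl, Finset.subset_insert _ _⟩

lemma DGRun.subset_of_le {g h : Finset α → ℝ} (R : DGRun α g h) :
    ∀ j ≤ Fintype.card α, ∀ i ≤ j, R.H i ⊆ R.H j ∧ R.G i ⊆ R.G j := by
  intro j
  induction j with
  | zero => intro _ i hi; interval_cases i; exact ⟨subset_rfl, subset_rfl⟩
  | succ j ih =>
    intro hj i hi
    rcases Nat.lt_or_ge i (j + 1) with hlt | hge
    · have hj' : j < Fintype.card α := hj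
      have h1 := ih (le_of_lt hj') i (Nat.lt_succ_iff.mp hlt)
      have h2 := R.subset_succ j hj'
      exact ⟨h1.1.trans h2.1, h1.2.trans h2.2⟩
    · have : i = j + 1 := le_antisymm hi hge
      subst this; exact ⟨subset_rfl, subset_rfl⟩

lemma DGRun.final {g h : Finset α → ℝ} (R : DGRun α g h) :
    R.H (Fintype.card α) = (R.G (Fintype.card α))ᶜ := by
  set n := Fintype.card α
  have hdisj := R.disj n le_rfl
  have hcover : ∀ x : α, x ∈ R.H n ∪ R.G n := by
    intro x
    obtain ⟨i, hi, hx⟩ := R.enum x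
    have hstep := R.step i hi
    have hsub := R.subset_of_le n le_rfl (i + 1) hi
    rcases hstep with ⟨h1, _, _⟩ | ⟨h1, _, _⟩
    · exact Finset.mem_union_left _ (hsub.1 (h1 ▸ (hx ▸ Finset.mem_insert_self _ _)))
    · exact Finset.mem_union_right _ (hsub.2 (h1 ▸ (hx ▸ Finset.mem_insert_self _ _)))
  ext x
  have hc := hcover x
  simp only [Finset.mem_union] at hc
  simp only [Finset.mem_compl]
  constructor
  · intro hx hg
    exact (Finset.disjoint_left.mp hdisj) hx hg
  · intro hx; tauto

lemma fObj_insert_diff (g h : Finset α → ℝ) (e : α) (S : Finset α) (he : e ∉ S) :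
    fObj g h (insert e S) - fObj g h S = marg h e S - marg g e ((insert e S)ᶜ) := by
  have key : Sᶜ = insert e ((insert e S)ᶜ) := compl_insert_eq e S he
  simp only [fObj, marg]
  rw [key]; ring

lemma fObj_compl_insert_diff (g h : Finset α → ℝ) (e : α) (S : Finset α) (he : e ∉ S) :
    fObj g h ((insert e S)ᶜ) - fObj g h Sᶜ = marg g e S - marg h e ((insert e S)ᶜ) := by
  have key : Sᶜ = insert e ((insert e S)ᶜ) := compl_insert_eq e S he
  simp only [fObj, marg, compl_compl]
  rw [key]; ring

theorem stmt11 (g h : Finset α → ℝ)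
    (hgm : Mono g) (hhm : Mono h) (hg0 : Nonneg g) (hh0 : Nonneg h)
    (hgs : Submodular g) (hhs : Submodular h)
    (hge : g ∅ = 0) (hhe : h ∅ = 0) (R : DGRun α g h) :
    fObj g h (R.H 0) = g Finset.univ ∧
    (∀ i < Fintype.card α, fObj g h (R.H i) ≤ fObj g h (R.H (i + 1))) ∧
    fObj g h ((R.G 0)ᶜ) = h Finset.univ ∧
    (∀ i < Fintype.card α, fObj g h ((R.G i)ᶜ) ≤ fObj g h ((R.G (i + 1))ᶜ)) ∧
    fObj g h (R.H (Fintype.card α)) = fObj g h ((R.G (Fintype.card α))ᶜ) := by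
  refine ⟨?_, ?_, ?_, ?_, ?_⟩
  · simp [fObj, R.H0, hhe]
  · intro i hi
    have hm := R.mem i hi
    simp only [Finset.mem_union, not_or] at hm
    have hdisj := R.disj i (le_of_lt hi)
    rcases R.step i hi with ⟨h1, h2, hle⟩ | ⟨h1, h2, _⟩
    · rw [h1]
      set e := R.elt i
      have hsub : R.G i ⊆ (insert e (R.H i))ᶜ := by
        intro x hx
        simp only [Finset.mem_compl, Finset.mem_insert, not_or]
        refine ⟨?_, Finset.disjoint_right.mp hdisj hx⟩
        rintro rfl; exact hm.2 hx
      have hnot : e ∉ (insert e (R.H i))ᶜ := by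
        simp [Finset.mem_compl]
      have hsm := hgs hsub e hnot
      have hdiff := fObj_insert_diff g h e (R.H i) hm.1
      linarith
    · rw [h2]
  · simp [fObj, R.G0, hge]
  · intro i hi
    have hm := R.mem i hi
    simp only [Finset.mem_union, not_or] at hm
    have hdisj := R.disj i (le_of_lt hi)
    rcases R.step i hi with ⟨_, h2, _⟩ | ⟨h1, h2, hle⟩
    · rw [h2]
    · rw [h1]
      set e := R.elt i
      have hsub : R.H i ⊆ (insert e (R.G i))ᶜ := by
        intro x hx
        simp only [Finset.mem_compl, Finset.mem_insert, not_or]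
        refine ⟨?_, Finset.disjoint_left.mp hdisj hx⟩
        rintro rfl; exact hm.1 hx
      have hnot : e ∉ (insert e (R.G i))ᶜ := by
        simp [Finset.mem_compl]
      have hsm := hhs hsub e hnot
      have hdiff := fObj_compl_insert_diff g h e (R.G i) hm.2
      linarith
  · rw [R.final]

end IncDec
end

section
/- Let g, h : 2^E → ℝ≥0 be monotone and submodular with g(E) = h(E). Then there exists an ordering π = (e_1, …, e_n) of E such that for every k ∈ {1, …, n} and every S ⊆ E with |S| = k, 2·f(S_k) ≥ f(S). -/
namespace IncDec

open Finset

variable {α : Type*} [Fintype α] [DecidableEq α]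

/-- One pass of the two-sided greedy: each element is assigned to the side
(`h`-side = first component, `g`-side = second component) with larger marginal gain. -/
noncomputable def run (g h : Finset α → ℝ) : List α → Finset α → Finset α → List α × List α
  | [], _, _ => ([], [])
  | x :: xs, Hc, Gc =>
    if marg g x Gc ≤ marg h x Hc then
      (x :: (run g h xs (insert x Hc) Gc).1, (run g h xs (insert x Hc) Gc).2)
    else
      ((run g h xs Hc (insert x Gc)).1, x :: (run g h xs Hc (insert x Gc)).2)

lemma run_perm (g h : Finset α → ℝ) : ∀ (xs : List α) (Hc Gc : Finset α),
    ((run g h xs Hc Gc).1 ++ (run g h xs Hc Gc).2).Perm xs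
  | [], _, _ => by simp [run]
  | x :: xs, Hc, Gc => by
    rw [run]
    split_ifs with hcond
    · simpa using (run_perm g h xs (insert x Hc) Gc).cons x
    · simpa using List.perm_middle.trans ((run_perm g h xs Hc (insert x Gc)).cons x)

lemma run_g_bound (g h : Finset α → ℝ) (hgs : Submodular g) :
    ∀ (xs : List α) (Hc Gc X : Finset α) (k : ℕ),
    xs.Nodup → Gc ⊆ X →
    (∀ b ∈ (run g h xs Hc Gc).2, b ∈ X) →
    (∀ a ∈ (run g h xs Hc Gc).1.take k, a ∉ X) →
    g (X ∪ ((run g h xs Hc Gc).1.take k).toFinset) - g X ≤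
      h (Hc ∪ ((run g h xs Hc Gc).1.take k).toFinset) - h Hc
  | [], Hc, Gc, X, k, _, _, _, _ => by simp [run]
  | x :: xs, Hc, Gc, X, k, hnd, hGX, hB, hA => by
    rw [run] at hB hA ⊢
    split_ifs at hB hA ⊢ with hcond
    · -- h-branch
      match k with
      | 0 => simp
      | (k'+1) =>
        have hsub : ∀ a ∈ (run g h xs (insert x Hc) Gc).1, a ∈ xs := by
          intro a ha
          exact (run_perm g h xs (insert x Hc) Gc).mem_iff.mp (List.mem_append_left _ ha)
        simp only [List.take_succ_cons] at hA ⊢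
        have hxX : x ∉ X := hA x List.mem_cons_self
        have hxxs : x ∉ xs := (List.nodup_cons.mp hnd).1
        have IH := run_g_bound g h hgs xs (insert x Hc) Gc (insert x X) k'
          (List.nodup_cons.mp hnd).2 (hGX.trans (Finset.subset_insert x X))
          (fun b hb => Finset.mem_insert_of_mem (hB b hb))
          (fun a ha => by
            have haxs : a ∈ xs := hsub a (List.take_subset _ _ ha)
            have : a ∉ X := hA a (List.mem_cons_of_mem _ ha)
            simp only [Finset.mem_insert, not_or]
            exact ⟨fun h' => hxxs (h' ▸ haxs), this⟩)
        have hgx : marg g x X ≤ marg g x Gc := hgs hGX x hxX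
        have hset1 : X ∪ (x :: (run g h xs (insert x Hc) Gc).1.take k').toFinset
            = insert x X ∪ ((run g h xs (insert x Hc) Gc).1.take k').toFinset := by
          simp [Finset.union_insert, Finset.insert_union]
        have hset2 : Hc ∪ (x :: (run g h xs (insert x Hc) Gc).1.take k').toFinset
            = insert x Hc ∪ ((run g h xs (insert x Hc) Gc).1.take k').toFinset := by
          simp [Finset.union_insert, Finset.insert_union]
        rw [hset1, hset2]
        have hm1 : marg g x X = g (insert x X) - g X := rfl
        have hm2 : marg h x Hc = h (insert x Hc) - h Hc := rfl
        have hm3 : marg g x Gc = g (insert x Gc) - g Gc := rfl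
        linarith [IH, hgx, hcond]
    · -- g-branch
      have hxX : x ∈ X := hB x List.mem_cons_self
      exact run_g_bound g h hgs xs Hc (insert x Gc) X k
        (List.nodup_cons.mp hnd).2 (Finset.insert_subset hxX hGX)
        (fun b hb => hB b (List.mem_cons_of_mem _ hb)) hA

lemma run_h_bound (g h : Finset α → ℝ) (hhs : Submodular h) :
    ∀ (xs : List α) (Hc Gc Y : Finset α) (j : ℕ),
    xs.Nodup → Hc ⊆ Y →
    (∀ a ∈ (run g h xs Hc Gc).1, a ∈ Y) →
    (∀ b ∈ (run g h xs Hc Gc).2.take j, b ∉ Y) →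
    h (Y ∪ ((run g h xs Hc Gc).2.take j).toFinset) - h Y ≤
      g (Gc ∪ ((run g h xs Hc Gc).2.take j).toFinset) - g Gc
  | [], Hc, Gc, Y, j, _, _, _, _ => by simp [run]
  | x :: xs, Hc, Gc, Y, j, hnd, hHY, hA, hB => by
    rw [run] at hB hA ⊢
    split_ifs at hB hA ⊢ with hcond
    · -- h-branch
      have hxY : x ∈ Y := hA x List.mem_cons_self
      exact run_h_bound g h hhs xs (insert x Hc) Gc Y j
        (List.nodup_cons.mp hnd).2 (Finset.insert_subset hxY hHY)
        (fun a ha => hA a (List.mem_cons_of_mem _ ha)) hB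
    · -- g-branch
      match j with
      | 0 => simp
      | (j'+1) =>
        have hsub : ∀ b ∈ (run g h xs Hc (insert x Gc)).2, b ∈ xs := by
          intro b hb
          exact (run_perm g h xs Hc (insert x Gc)).mem_iff.mp (List.mem_append_right _ hb)
        simp only [List.take_succ_cons] at hB ⊢
        have hxY : x ∉ Y := hB x List.mem_cons_self
        have hxxs : x ∉ xs := (List.nodup_cons.mp hnd).1
        have IH := run_h_bound g h hhs xs Hc (insert x Gc) (insert x Y) j'
          (List.nodup_cons.mp hnd).2 (hHY.trans (Finset.subset_insert x Y))
          (fun a ha => Finset.mem_insert_of_mem (hA a ha))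
          (fun b hb => by
            have hbxs : b ∈ xs := hsub b (List.take_subset _ _ hb)
            have : b ∉ Y := hB b (List.mem_cons_of_mem _ hb)
            simp only [Finset.mem_insert, not_or]
            exact ⟨fun h' => hxxs (h' ▸ hbxs), this⟩)
        have hhx : marg h x Y ≤ marg h x Hc := hhs hHY x hxY
        have hset1 : Y ∪ (x :: (run g h xs Hc (insert x Gc)).2.take j').toFinset
            = insert x Y ∪ ((run g h xs Hc (insert x Gc)).2.take j').toFinset := by
          simp [Finset.union_insert, Finset.insert_union]
        have hset2 : Gc ∪ (x :: (run g h xs Hc (insert x Gc)).2.take j').toFinset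
            = insert x Gc ∪ ((run g h xs Hc (insert x Gc)).2.take j').toFinset := by
          simp [Finset.union_insert, Finset.insert_union]
        rw [hset1, hset2]
        have hm1 : marg h x Y = h (insert x Y) - h Y := rfl
        have hm2 : marg h x Hc = h (insert x Hc) - h Hc := rfl
        have hm3 : marg g x Gc = g (insert x Gc) - g Gc := rfl
        have hcond' : marg h x Hc ≤ marg g x Gc := le_of_lt (not_le.mp hcond)
        linarith [IH, hhx]

theorem stmt12 (g h : Finset α → ℝ)
    (hgm : Mono g) (hhm : Mono h) (hg0 : Nonneg g) (hh0 : Nonneg h)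
    (hgs : Submodular g) (hhs : Submodular h)
    (heq : g Finset.univ = h Finset.univ) :
    ∃ π : List α, π.Nodup ∧ (∀ x : α, x ∈ π) ∧
      ∀ k : ℕ, 1 ≤ k → k ≤ Fintype.card α → ∀ S : Finset α, S.card = k →
        2 * fObj g h (π.take k).toFinset ≥ fObj g h S := by
  classical
  set L := (Finset.univ : Finset α).toList with hL
  set A := (run g h L ∅ ∅).1 with hA
  set B := (run g h L ∅ ∅).2 with hB
  have hndL : L.Nodup := Finset.nodup_toList _
  have hperm : (A ++ B).Perm L := run_perm g h L ∅ ∅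
  have hpermπ : (A ++ B.reverse).Perm L :=
    ((B.reverse_perm.append_left A)).trans hperm
  have hndπ : (A ++ B.reverse).Nodup := hpermπ.nodup_iff.mpr hndL
  have hmemπ : ∀ x : α, x ∈ A ++ B.reverse := by
    intro x
    rw [hpermπ.mem_iff, Finset.mem_toList]
    exact Finset.mem_univ x
  refine ⟨A ++ B.reverse, hndπ, hmemπ, ?_⟩
  intro k hk1 hkn S hScard
  have hlen : (A ++ B.reverse).length = Fintype.card α := by
    rw [hpermπ.length_eq, Finset.length_toList, Finset.card_univ]
  -- key claim: g univ ≤ fObj g h (prefix k)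
  have hkey : g Finset.univ ≤ fObj g h (((A ++ B.reverse).take k).toFinset) := by
    by_cases hkr : k ≤ A.length
    · -- case 1: prefix within A
      have htake : (A ++ B.reverse).take k = A.take k :=
        List.take_append_of_le_length hkr
      rw [htake]
      set P := (A.take k).toFinset with hP
      have hndAB : (A ++ B).Nodup := hperm.nodup_iff.mpr hndL
      have hdisj : ∀ b ∈ B, b ∉ A := fun b hb ha =>
        (List.disjoint_of_nodup_append hndAB) ha hb
      have key := run_g_bound g h hgs L ∅ ∅ Pᶜ k hndL (Finset.empty_subset _)
        (fun b hb => by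
          rw [Finset.mem_compl]
          intro hbP
          exact hdisj b hb (List.take_subset _ _ (List.mem_toFinset.mp hbP)))
        (fun a ha => by
          rw [Finset.mem_compl, not_not]
          exact List.mem_toFinset.mpr ha)
      rw [← hA] at key
      have hPU : Pᶜ ∪ P = Finset.univ := by rw [Finset.union_comm]; exact Finset.union_compl P
      rw [hPU, Finset.empty_union] at key
      have h0 : 0 ≤ h ∅ := hh0 ∅
      simp only [fObj]
      linarith
    · -- case 2: prefix contains all of A
      push_neg at hkr
      have hrm : A.length + B.length = Fintype.card α := by
        have := hperm.length_eq
        rw [Finset.length_toList, Finset.card_univ, List.length_append] at this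
        exact this
      set j := B.length - (k - A.length) with hj
      have htake : (A ++ B.reverse).take k = A ++ B.reverse.take (k - A.length) := by
        rw [List.take_append, List.take_of_length_le (le_of_lt hkr)]
      have hdrop : (A ++ B.reverse).drop k = B.reverse.drop (k - A.length) := by
        rw [List.drop_append, List.drop_of_length_le (le_of_lt hkr),
          List.nil_append]
      have hkrle : k - A.length ≤ B.length := by
        have : k ≤ A.length + B.length := hrm ▸ hkn
        omega
      have hrevdrop : B.reverse.drop (k - A.length) = (B.take j).reverse := by
        have hsplit : B.reverse = (B.drop j).reverse ++ (B.take j).reverse := by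
          rw [← List.reverse_append, List.take_append_drop]
        rw [hsplit]
        have hlend : ((B.drop j).reverse).length = k - A.length := by
          rw [List.length_reverse, List.length_drop]
          omega
        rw [← hlend, List.drop_left]
      set Q := (((A ++ B.reverse)).take k).toFinset with hQ
      set T := (B.take j).toFinset with hT
      have hQc : Qᶜ = T := by
        have hsplitπ : (A ++ B.reverse).take k ++ (A ++ B.reverse).drop k
            = A ++ B.reverse := List.take_append_drop _ _
        have hndtd : ((A ++ B.reverse).take k ++ (A ++ B.reverse).drop k).Nodup := by
          rw [hsplitπ]; exact hndπ
        have hdisjtd := List.disjoint_of_nodup_append hndtd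
        ext x
        simp only [Finset.mem_compl, hQ, hT, List.mem_toFinset]
        constructor
        · intro hx
          have hxπ : x ∈ (A ++ B.reverse).take k ++ (A ++ B.reverse).drop k := by
            rw [hsplitπ]; exact hmemπ x
          rcases List.mem_append.mp hxπ with h1 | h2
          · exact absurd h1 hx
          · rw [hdrop, hrevdrop, List.mem_reverse] at h2
            exact h2
        · intro hx hxk
          have : x ∈ (A ++ B.reverse).drop k := by
            rw [hdrop, hrevdrop, List.mem_reverse]
            exact hx
          exact hdisjtd hxk this
      have key := run_h_bound g h hhs L ∅ ∅ Q j hndL (Finset.empty_subset _)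
        (fun a ha => by
          rw [hQ, List.mem_toFinset, htake]
          exact List.mem_append_left _ ha)
        (fun b hb => by
          have : b ∈ Qᶜ := by rw [hQc, hT]; exact List.mem_toFinset.mpr hb
          exact Finset.mem_compl.mp this)
      have hQT : Q ∪ T = Finset.univ := by rw [← hQc, Finset.union_compl]
      rw [hQT, Finset.empty_union] at key
      have h0 : 0 ≤ g ∅ := hg0 ∅
      have : h Finset.univ ≤ h Q + g T := by linarith
      simp only [fObj]
      rw [heq, hQc]
      exact this
  -- conclude
  have hfS : fObj g h S ≤ 2 * g Finset.univ := by
    have h1 : h S ≤ h Finset.univ := hhm (Finset.subset_univ S)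
    have h2 : g Sᶜ ≤ g Finset.univ := hgm (Finset.subset_univ Sᶜ)
    simp only [fObj]
    rw [heq] at h2 ⊢
    linarith [h2, h1, heq]
  have := hkey
  simp only [ge_iff_le]
  calc fObj g h S ≤ 2 * g Finset.univ := hfS
    _ ≤ 2 * fObj g h (((A ++ B.reverse)).take k).toFinset := by linarith


end IncDec
end

section
/- Let F : 2^E → ℝ≥0 be monotone with generic submodularity ratio at least γ ∈ (0,1]. Then for all A, B ⊆ E with F(B | A) > 0, Σ_{b ∈ B} F(b | A) ≥ γ·F(B | A); that is, the submodularity ratio of F is at least its generic submodularity ratio. -/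
namespace IncDec

open Finset

variable {α : Type*} [Fintype α] [DecidableEq α]

theorem stmt14 (F : Finset α → ℝ) (γ : ℝ) (hγ0 : 0 < γ) (hγ1 : γ ≤ 1)
    (hFm : Mono F) (hF0 : Nonneg F) (hFγ : GenSubRatioGE F γ) :
    ∀ A B : Finset α, 0 < margSet F B A →
      ∑ b ∈ B, marg F b A ≥ γ * margSet F B A := by
  have key : ∀ B A : Finset α, γ * (F (B ∪ A) - F A) ≤ ∑ b ∈ B, marg F b A := by
    intro B
    induction B using Finset.induction with
    | empty => intro A; simp
    | @insert a B ha ih =>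
      intro A
      have h1 : marg F a A ≥ γ * marg F a (A ∪ B) := hFγ A B a
      have h2 := ih A
      have hins : insert a B ∪ A = insert a (A ∪ B) := by
        rw [Finset.insert_union, Finset.union_comm]
      rw [Finset.sum_insert ha, hins]
      have : γ * (F (insert a (A ∪ B)) - F A)
          = γ * marg F a (A ∪ B) + γ * (F (B ∪ A) - F A) := by
        rw [Finset.union_comm B A]; unfold marg; ring
      rw [this]
      exact add_le_add h1 h2
  intro A B _
  exact key B A

end IncDec
end

section
/- For every integer k ≥ 2 there exist a finite set E with |E| = 2k, a monotone submodular function h : 2^E → ℝ≥0 and a monotone modular function g : 2^E → ℝ≥0 with g(∅) = h(∅) = 0, together with a double-greedy run for g and h whose first k steps all add the chosen element to H (so |H_k| = k and G_k = ∅), such that f(H_k) = k^k − (k−1)^k while there exists S ⊆ E with |S| = k and f(S) = 2k^k − (k−1)^k. (Since (2k^k − (k−1)^k)/(k^k − (k−1)^k) → 1 + e/(e−1) as k → ∞, the double-greedy algorithm is no better than (1 + e/(e−1))-competitive for monotone submodular g and h.) -/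
namespace IncDec

open Finset

variable {α : Type*} [Fintype α] [DecidableEq α]

/-! ### Auxiliary construction for `stmt15` -/

noncomputable def qr (k : ℕ) : ℝ := ((k:ℝ) - 1) / k
noncomputable def cr (k : ℕ) : ℝ := (k:ℝ) ^ (k - 1)

def aCt (k : ℕ) (S : Finset (Fin (2*k))) : ℕ :=
  (S.filter (fun x : Fin (2*k) => (x:ℕ) < k)).card
def bCt (k : ℕ) (S : Finset (Fin (2*k))) : ℕ :=
  (S.filter (fun x : Fin (2*k) => ¬ (x:ℕ) < k)).card

noncomputable def hF (k : ℕ) (S : Finset (Fin (2*k))) : ℝ :=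
  cr k * ((k:ℝ) - ((k:ℝ) - (bCt k S : ℝ)) * qr k ^ aCt k S)

noncomputable def gF (k : ℕ) (S : Finset (Fin (2*k))) : ℝ :=
  ∑ e ∈ S, if (e:ℕ) < k then cr k * qr k ^ (e:ℕ) else 0

def HH (k : ℕ) (i : ℕ) : Finset (Fin (2*k)) := univ.filter (fun x : Fin (2*k) => (x:ℕ) < i)

variable {k : ℕ}

lemma hkR (hk : 2 ≤ k) : (1:ℝ) ≤ (k:ℝ) := by exact_mod_cast Nat.one_le_of_lt hk

lemma hq0 (hk : 2 ≤ k) : 0 ≤ qr k := by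
  have h := hkR hk
  exact div_nonneg (by linarith) (by linarith)

lemma hq1 (hk : 2 ≤ k) : qr k ≤ 1 := by
  have h := hkR hk
  rw [qr, div_le_one (by linarith)]; linarith

lemma hc0 : 0 ≤ cr k := by unfold cr; positivity

lemma card_lt_filter (m : ℕ) (hm : m ≤ 2*k) :
    ((univ : Finset (Fin (2*k))).filter (fun x : Fin (2*k) => (x:ℕ) < m)).card = m := by
  have : (univ : Finset (Fin (2*k))).filter (fun x : Fin (2*k) => (x:ℕ) < m)
      = (Finset.range m).attachFin (fun a ha => by simp only [Finset.mem_range] at ha; omega) := by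
    ext x
    simp [Finset.mem_attachFin]
  rw [this, Finset.card_attachFin, Finset.card_range]

lemma aCt_add_bCt (S : Finset (Fin (2*k))) : aCt k S + bCt k S = S.card :=
  Finset.card_filter_add_card_filter_not _

lemma bCt_le (S : Finset (Fin (2*k))) : bCt k S ≤ k := by
  have h1 : bCt k S ≤ bCt k (univ : Finset (Fin (2*k))) :=
    Finset.card_le_card (Finset.filter_subset_filter _ (Finset.subset_univ S))
  have h2 : aCt k (univ : Finset (Fin (2*k))) = k := card_lt_filter k (by omega)
  have h3 := aCt_add_bCt (univ : Finset (Fin (2*k)))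
  rw [Finset.card_univ, Fintype.card_fin] at h3
  omega

lemma aCt_mono {S T : Finset (Fin (2*k))} (h : S ⊆ T) : aCt k S ≤ aCt k T :=
  Finset.card_le_card (Finset.filter_subset_filter _ h)

lemma bCt_mono {S T : Finset (Fin (2*k))} (h : S ⊆ T) : bCt k S ≤ bCt k T :=
  Finset.card_le_card (Finset.filter_subset_filter _ h)

lemma key (hk : 2 ≤ k) {S T : Finset (Fin (2*k))} (hST : S ⊆ T) :
    ((k:ℝ) - (bCt k T : ℝ)) * qr k ^ aCt k T ≤ ((k:ℝ) - (bCt k S : ℝ)) * qr k ^ aCt k S := by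
  have hbT : (0:ℝ) ≤ (k:ℝ) - (bCt k T : ℝ) := by
    have h := bCt_le (k := k) T
    have : ((bCt k T : ℝ)) ≤ (k:ℝ) := by exact_mod_cast h
    linarith
  have hbS : (0:ℝ) ≤ (k:ℝ) - (bCt k S : ℝ) := by
    have h := bCt_le (k := k) S
    have : ((bCt k S : ℝ)) ≤ (k:ℝ) := by exact_mod_cast h
    linarith
  have hb : ((bCt k S : ℝ)) ≤ (bCt k T : ℝ) := by exact_mod_cast bCt_mono hST
  calc ((k:ℝ) - (bCt k T : ℝ)) * qr k ^ aCt k T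
      ≤ ((k:ℝ) - (bCt k S : ℝ)) * qr k ^ aCt k T := by
        apply mul_le_mul_of_nonneg_right (by linarith) (pow_nonneg (hq0 hk) _)
    _ ≤ ((k:ℝ) - (bCt k S : ℝ)) * qr k ^ aCt k S := by
        apply mul_le_mul_of_nonneg_left _ hbS
        exact pow_le_pow_of_le_one (hq0 hk) (hq1 hk) (aCt_mono hST)

lemma aCt_insert_A {x : Fin (2*k)} {S : Finset (Fin (2*k))} (hx : (x:ℕ) < k) (hxS : x ∉ S) :
    aCt k (insert x S) = aCt k S + 1 := by
  unfold aCt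
  rw [Finset.filter_insert, if_pos hx, Finset.card_insert_of_notMem (by simp [hxS])]

lemma bCt_insert_A {x : Fin (2*k)} {S : Finset (Fin (2*k))} (hx : (x:ℕ) < k) :
    bCt k (insert x S) = bCt k S := by
  unfold bCt
  rw [Finset.filter_insert, if_neg (by simpa using hx)]

lemma aCt_insert_B {x : Fin (2*k)} {S : Finset (Fin (2*k))} (hx : ¬ (x:ℕ) < k) :
    aCt k (insert x S) = aCt k S := by
  unfold aCt
  rw [Finset.filter_insert, if_neg hx]

lemma bCt_insert_B {x : Fin (2*k)} {S : Finset (Fin (2*k))} (hx : ¬ (x:ℕ) < k) (hxS : x ∉ S) :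
    bCt k (insert x S) = bCt k S + 1 := by
  unfold bCt
  rw [Finset.filter_insert, if_pos hx, Finset.card_insert_of_notMem (by simp [hxS])]

lemma marg_hA {x : Fin (2*k)} {S : Finset (Fin (2*k))} (hx : (x:ℕ) < k) (hxS : x ∉ S) :
    marg (hF k) x S
      = (cr k * (1 - qr k)) * (((k:ℝ) - (bCt k S : ℝ)) * qr k ^ aCt k S) := by
  unfold marg hF
  rw [aCt_insert_A hx hxS, bCt_insert_A hx, pow_succ]
  ring

lemma marg_hB {x : Fin (2*k)} {S : Finset (Fin (2*k))} (hx : ¬ (x:ℕ) < k) (hxS : x ∉ S) :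
    marg (hF k) x S = cr k * qr k ^ aCt k S := by
  unfold marg hF
  rw [aCt_insert_B hx, bCt_insert_B hx hxS]
  push_cast
  ring

lemma card_HH {i : ℕ} (hi : i ≤ 2*k) : (HH k i).card = i := card_lt_filter i hi

lemma aCt_HH (i : ℕ) : aCt k (HH k i) = min i k := by
  unfold aCt HH
  rw [Finset.filter_filter]
  simp only [← lt_min_iff]
  exact card_lt_filter _ (by omega)

lemma bCt_HH {i : ℕ} (hi : i ≤ 2*k) : bCt k (HH k i) = i - min i k := by
  have h1 := aCt_add_bCt (HH k i)
  rw [card_HH hi, aCt_HH] at h1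
  omega

lemma insert_HH {i : ℕ} {x : Fin (2*k)} (hx : (x:ℕ) = i) :
    insert x (HH k i) = HH k (i+1) := by
  ext y
  simp only [Finset.mem_insert, HH, Finset.mem_filter, Finset.mem_univ, true_and, Fin.ext_iff, hx]
  omega

lemma not_mem_HH {i : ℕ} {x : Fin (2*k)} (hx : (x:ℕ) = i) : x ∉ HH k i := by
  simp [HH, hx]

lemma marg_g_empty (x : Fin (2*k)) :
    marg (gF k) x (∅ : Finset (Fin (2*k)))
      = if (x:ℕ) < k then cr k * qr k ^ (x:ℕ) else 0 := by
  simp [marg, gF]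

lemma marg_h_HH (hk : 2 ≤ k) {i : ℕ} (hi : i ≤ 2*k) {x : Fin (2*k)} (hx : x ∉ HH k i) :
    marg (hF k) x (HH k i) = cr k * qr k ^ (min i k) := by
  have hxi : ¬ (x:ℕ) < i := by simpa [HH] using hx
  have hK0 : (k:ℝ) ≠ 0 := by
    have := hkR hk; intro h; rw [h] at this; linarith
  by_cases hxa : (x:ℕ) < k
  · have hik : i < k := by omega
    have hmin : min i k = i := Nat.min_eq_left hik.le
    rw [marg_hA hxa hx, bCt_HH hi, aCt_HH, hmin, Nat.sub_self]
    have hq1K : (1 - qr k) * (k:ℝ) = 1 := by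
      rw [qr]; field_simp; ring
    push_cast
    linear_combination (cr k * qr k ^ i) * hq1K
  · rw [marg_hB hxa hx, aCt_HH]

lemma hck (hk : 2 ≤ k) : cr k * (k:ℝ) = (k:ℝ)^k := by
  rw [cr, ← pow_succ]; congr 1; omega

lemma hqk : qr k ^ k = ((k:ℝ)-1)^k / (k:ℝ)^k := by rw [qr, div_pow]

lemma hF_HHk (hk : 2 ≤ k) : hF k (HH k k) = (k:ℝ)^k - ((k:ℝ)-1)^k := by
  have hK0 : (k:ℝ) ≠ 0 := by
    have := hkR hk; intro h; rw [h] at this; linarith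
  have hKk0 : (k:ℝ)^k ≠ 0 := pow_ne_zero _ hK0
  rw [hF, aCt_HH, bCt_HH (by omega), Nat.min_self, Nat.sub_self]
  push_cast
  calc cr k * ((k:ℝ) - ((k:ℝ) - 0) * qr k ^ k) = cr k * (k:ℝ) * (1 - qr k ^ k) := by ring
    _ = (k:ℝ)^k * (1 - ((k:ℝ)-1)^k / (k:ℝ)^k) := by rw [hck hk, hqk]
    _ = (k:ℝ)^k - ((k:ℝ)-1)^k := by field_simp

lemma gF_HHk (hk : 2 ≤ k) : gF k (HH k k) = (k:ℝ)^k - ((k:ℝ)-1)^k := by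
  have hK0 : (k:ℝ) ≠ 0 := by
    have := hkR hk; intro h; rw [h] at this; linarith
  have hKk0 : (k:ℝ)^k ≠ 0 := pow_ne_zero _ hK0
  have hqne : qr k ≠ 1 := by
    have h := hkR hk
    rw [qr]; intro hq
    rw [div_eq_one_iff_eq hK0] at hq
    linarith
  have h1 : gF k (HH k k)
      = ∑ e ∈ (univ : Finset (Fin (2*k))), if (e:ℕ) < k then cr k * qr k ^ (e:ℕ) else 0 := by
    apply Finset.sum_subset (Finset.subset_univ _)
    intro x _ hx
    rw [if_neg (by simpa [HH] using hx)]
  have h2 : ∑ e ∈ (univ : Finset (Fin (2*k))), (if (e:ℕ) < k then cr k * qr k ^ (e:ℕ) else 0)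
      = ∑ j ∈ Finset.range (2*k), (if j < k then cr k * qr k ^ j else 0) :=
    Fin.sum_univ_eq_sum_range (fun j => if j < k then cr k * qr k ^ j else 0) (2*k)
  have h3 : ∑ j ∈ Finset.range (2*k), (if j < k then cr k * qr k ^ j else 0)
      = ∑ j ∈ Finset.range k, cr k * qr k ^ j := by
    rw [← Finset.sum_filter]
    congr 1
    ext j
    simp only [Finset.mem_filter, Finset.mem_range]
    omega
  have e1 : qr k - 1 = -(1/(k:ℝ)) := by
    rw [qr]; field_simp; ring
  rw [h1, h2, h3, ← Finset.mul_sum, geom_sum_eq hqne]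
  calc cr k * ((qr k ^ k - 1)/(qr k - 1)) = cr k * (k:ℝ) * (1 - qr k ^ k) := by
        rw [e1]; field_simp; ring
    _ = (k:ℝ)^k * (1 - ((k:ℝ)-1)^k / (k:ℝ)^k) := by rw [hck hk, hqk]
    _ = (k:ℝ)^k - ((k:ℝ)-1)^k := by field_simp

lemma gF_B : gF k ((HH k k)ᶜ) = 0 := by
  apply Finset.sum_eq_zero
  intro x hx
  rw [Finset.mem_compl] at hx
  rw [if_neg (by simpa [HH] using hx)]

lemma hF_B (hk : 2 ≤ k) : hF k ((HH k k)ᶜ) = (k:ℝ)^k := by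
  have haB : aCt k ((HH k k)ᶜ) = 0 := by
    unfold aCt
    rw [Finset.card_eq_zero, Finset.filter_eq_empty_iff]
    intro x hx
    rw [Finset.mem_compl] at hx
    simpa [HH] using hx
  have hcardB : ((HH k k)ᶜ).card = k := by
    rw [Finset.card_compl, card_HH (by omega), Fintype.card_fin]
    omega
  have hbB : bCt k ((HH k k)ᶜ) = k := by
    have := aCt_add_bCt ((HH k k)ᶜ)
    rw [haB, hcardB] at this
    omega
  rw [hF, haB, hbB, pow_zero]
  rw [← hck hk]
  ring

theorem stmt15 (k : ℕ) (hk : 2 ≤ k) :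
    ∃ g h : Finset (Fin (2 * k)) → ℝ,
      Mono g ∧ Mono h ∧ Nonneg g ∧ Nonneg h ∧
      Submodular h ∧ Modular g ∧ g ∅ = 0 ∧ h ∅ = 0 ∧
      ∃ R : DGRun (Fin (2 * k)) g h,
        (∀ i < k, R.H (i + 1) = insert (R.elt i) (R.H i) ∧ R.G (i + 1) = R.G i) ∧
        (R.H k).card = k ∧ R.G k = ∅ ∧
        fObj g h (R.H k) = (k : ℝ) ^ k - ((k : ℝ) - 1) ^ k ∧
        ∃ S : Finset (Fin (2 * k)), S.card = k ∧
          fObj g h S = 2 * (k : ℝ) ^ k - ((k : ℝ) - 1) ^ k := by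
  classical
  have hcard : Fintype.card (Fin (2*k)) = 2*k := Fintype.card_fin _
  refine ⟨gF k, hF k, ?_, ?_, ?_, ?_, ?_, ?_, ?_, ?_, ?_⟩
  · -- Mono g
    intro S T hST
    apply Finset.sum_le_sum_of_subset_of_nonneg hST
    intro e _ _
    split
    · exact mul_nonneg hc0 (pow_nonneg (hq0 hk) _)
    · exact le_refl 0
  · -- Mono h
    intro S T hST
    have h1 := mul_le_mul_of_nonneg_left (key hk hST) (hc0 (k := k))
    simp only [hF]
    nlinarith [h1]
  · -- Nonneg g
    intro S
    apply Finset.sum_nonneg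
    intro e _
    split
    · exact mul_nonneg hc0 (pow_nonneg (hq0 hk) _)
    · exact le_refl 0
  · -- Nonneg h
    intro S
    rw [hF]
    have hb : (0:ℝ) ≤ (bCt k S : ℝ) := Nat.cast_nonneg _
    have hKpos : (0:ℝ) < (k:ℝ) := by have := hkR hk; linarith
    have h1 : ((k:ℝ) - (bCt k S:ℝ)) * qr k ^ aCt k S ≤ (k:ℝ) * 1 := by
      apply mul_le_mul (by linarith) (pow_le_one₀ (hq0 hk) (hq1 hk))
        (pow_nonneg (hq0 hk) _) (by linarith)
    apply mul_nonneg hc0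
    linarith [h1]
  · -- Submodular h
    intro S T hST e heT
    have heS : e ∉ S := fun h => heT (hST h)
    by_cases he : (e:ℕ) < k
    · rw [marg_hA he heT, marg_hA he heS]
      apply mul_le_mul_of_nonneg_left (key hk hST)
      exact mul_nonneg hc0 (by linarith [hq1 hk])
    · rw [marg_hB he heT, marg_hB he heS]
      apply mul_le_mul_of_nonneg_left _ hc0
      exact pow_le_pow_of_le_one (hq0 hk) (hq1 hk) (aCt_mono hST)
  · -- Modular g
    intro S
    simp only [gF]
    refine Finset.sum_congr rfl fun e _ => ?_
    rw [Finset.sum_singleton]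
  · simp [gF]
  · -- h ∅ = 0
    simp [hF, aCt, bCt]
  · -- the run
    refine ⟨⟨fun i => ⟨i % (2*k), Nat.mod_lt _ (by omega)⟩, HH k, fun _ => ∅,
      by ext x; simp [HH], rfl, ?_, ?_, ?_, ?_, ?_⟩, ?_, ?_, rfl, ?_, ?_⟩
    · -- mem
      intro i hi
      rw [hcard] at hi
      rw [Finset.union_empty]
      exact not_mem_HH (Nat.mod_eq_of_lt hi)
    · -- distinct
      intro i hi j hj hij
      rw [hcard] at hi hj
      have := congrArg Fin.val hij
      simpa [Nat.mod_eq_of_lt hi, Nat.mod_eq_of_lt hj] using this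
    · -- enum
      intro x
      refine ⟨(x:ℕ), by rw [hcard]; exact x.isLt, ?_⟩
      apply Fin.ext
      simp [Nat.mod_eq_of_lt x.isLt]
    · -- greedy
      intro i hi x hx
      rw [hcard] at hi
      rw [Finset.union_empty] at hx
      have hei : ((⟨i % (2*k), Nat.mod_lt _ (by omega : 0 < 2*k)⟩ : Fin (2*k)) : ℕ) = i :=
        Nat.mod_eq_of_lt hi
      have hM := marg_h_HH hk hi.le (not_mem_HH (k := k) hei)
      have hMnn : 0 ≤ cr k * qr k ^ (min i k) := mul_nonneg hc0 (pow_nonneg (hq0 hk) _)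
      apply max_le
      · rw [marg_g_empty]
        split
        · -- x ∈ A
          have hxi : ¬ (x:ℕ) < i := by simpa [HH] using hx
          refine le_trans ?_ (le_max_right _ _)
          rw [hM]
          apply mul_le_mul_of_nonneg_left _ hc0
          exact pow_le_pow_of_le_one (hq0 hk) (hq1 hk) (by omega)
        · exact le_trans (le_trans hMnn (le_of_eq hM.symm)) (le_max_right _ _)
      · rw [marg_h_HH hk hi.le hx]
        exact le_trans (le_of_eq hM.symm) (le_max_right _ _)
    · -- step
      intro i hi
      rw [hcard] at hi
      have hei : ((⟨i % (2*k), Nat.mod_lt _ (by omega : 0 < 2*k)⟩ : Fin (2*k)) : ℕ) = i :=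
        Nat.mod_eq_of_lt hi
      left
      refine ⟨(insert_HH hei).symm, rfl, ?_⟩
      rw [marg_g_empty, marg_h_HH hk hi.le (not_mem_HH (k := k) hei), hei]
      split
      · next h =>
        rw [Nat.min_eq_left h.le]
      · exact mul_nonneg hc0 (pow_nonneg (hq0 hk) _)
    · -- first k steps insert into H
      intro i hi
      have hei : ((⟨i % (2*k), Nat.mod_lt _ (by omega : 0 < 2*k)⟩ : Fin (2*k)) : ℕ) = i :=
        Nat.mod_eq_of_lt (by omega)
      exact ⟨(insert_HH hei).symm, rfl⟩
    · exact card_HH (by omega)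
    · -- fObj at H k
      rw [fObj, hF_HHk hk, gF_B]
      ring
    · -- optimal S
      refine ⟨(HH k k)ᶜ, ?_, ?_⟩
      · rw [Finset.card_compl, card_HH (by omega), Fintype.card_fin]
        omega
      · rw [fObj, compl_compl, hF_B hk, gF_HHk hk]
        ring



end IncDec
end

section
/- There exist a finite set E with |E| = 2, monotone modular functions g, h : 2^E → ℝ≥0 with g(∅) = h(∅) = 0, and a double-greedy run for g and h such that f(H_1) = 1 while there exists S ⊆ E with |S| = 1 and f(S) = 2; hence the double-greedy algorithm is not better than 2-competitive even for monotone modular functions. -/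
namespace IncDec

open Finset

variable {α : Type*} [Fintype α] [DecidableEq α]

/-- indicator of membership of `a`. -/
def ind (a : Fin 2) (S : Finset (Fin 2)) : ℝ := if a ∈ S then 1 else 0

lemma ind_mono (a : Fin 2) : Mono (ind a) := by
  intro S T hST
  unfold ind
  by_cases hS : a ∈ S
  · simp [hS, hST hS]
  · simp [hS]; positivity

lemma ind_nonneg (a : Fin 2) : Nonneg (ind a) := by
  intro S; unfold ind; positivity

lemma ind_modular (a : Fin 2) : Modular (ind a) := by
  intro S
  unfold ind
  simp only [Finset.mem_singleton]
  rw [Finset.sum_ite_eq S a (fun _ => (1:ℝ))]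

theorem stmt16 :
    ∃ g h : Finset (Fin 2) → ℝ,
      Mono g ∧ Mono h ∧ Nonneg g ∧ Nonneg h ∧
      Modular g ∧ Modular h ∧ g ∅ = 0 ∧ h ∅ = 0 ∧
      ∃ R : DGRun (Fin 2) g h,
        fObj g h (R.H 1) = 1 ∧
        ∃ S : Finset (Fin 2), S.card = 1 ∧ fObj g h S = 2 := by
  refine ⟨ind 0, ind 1, ind_mono 0, ind_mono 1, ind_nonneg 0, ind_nonneg 1,
    ind_modular 0, ind_modular 1, by simp [ind], by simp [ind], ?_⟩
  refine ⟨⟨fun i => if i = 0 then 0 else 1,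
    fun i => if i ≤ 1 then ∅ else {1},
    fun i => if i = 0 then ∅ else {0}, rfl, rfl, ?_, ?_, ?_, ?_, ?_⟩, ?_, {1}, rfl, ?_⟩
  · intro i hi
    rw [Fintype.card_fin] at hi
    interval_cases i <;> decide
  · intro i hi j hj
    rw [Fintype.card_fin] at hi hj
    interval_cases i <;> interval_cases j <;> decide
  · intro x
    fin_cases x
    · exact ⟨0, by norm_num⟩
    · exact ⟨1, by norm_num⟩
  · intro i hi x hx
    rw [Fintype.card_fin] at hi
    interval_cases i
    · fin_cases x <;> simp [marg, ind]
    · fin_cases x <;> simp_all [marg, ind]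
  · intro i hi
    rw [Fintype.card_fin] at hi
    interval_cases i
    · right
      refine ⟨by decide, by decide, ?_⟩
      simp [marg, ind]
    · left
      refine ⟨by decide, by decide, ?_⟩
      simp [marg, ind]
  · simp [fObj, ind]
  · simp [fObj, ind]
    norm_num [show ({1}ᶜ : Finset (Fin 2)) = {0} from by decide]

end IncDec
end

section
/- Let g, h : 2^E → ℝ≥0 be monotone with g(∅) = h(∅) = 0 and with generic submodularity ratio at least γ ∈ (0,1], and consider any double-greedy run for g and h. Then for every k ∈ {0, 1, …, n} and every S ⊆ E, g(E \ S) ≤ (1/γ)·(h(H_k) + g(E \ H_k)) = (1/γ)·f(H_k). -/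
namespace IncDec

open Finset

variable {α : Type*} [Fintype α] [DecidableEq α]

theorem stmt18 (g h : Finset α → ℝ) (γ : ℝ) (hγ0 : 0 < γ) (hγ1 : γ ≤ 1)
    (hgm : Mono g) (hhm : Mono h) (hg0 : Nonneg g) (hh0 : Nonneg h)
    (hge : g ∅ = 0) (hhe : h ∅ = 0)
    (hgγ : GenSubRatioGE g γ) (hhγ : GenSubRatioGE h γ)
    (R : DGRun α g h) :
    ∀ k ≤ Fintype.card α, ∀ S : Finset α,
      g Sᶜ ≤ (1 / γ) * (h (R.H k) + g ((R.H k)ᶜ)) ∧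
      (1 / γ) * (h (R.H k) + g ((R.H k)ᶜ)) = (1 / γ) * fObj g h (R.H k) := by
  -- disjointness of H k and G k
  have hdisj : ∀ k ≤ Fintype.card α, Disjoint (R.H k) (R.G k) := by
    intro k
    induction k with
    | zero => intro _; simp [R.H0, R.G0]
    | succ k ih =>
      intro hk
      have hk' : k < Fintype.card α := hk
      have ihd := ih (le_of_lt hk')
      have hmem := R.mem k hk'
      simp only [Finset.mem_union, not_or] at hmem
      rcases R.step k hk' with ⟨hH, hG, _⟩ | ⟨hG, hH, _⟩
      · rw [hH, hG, Finset.disjoint_insert_left]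
        exact ⟨hmem.2, ihd⟩
      · rw [hH, hG, Finset.disjoint_insert_right]
        exact ⟨hmem.1, ihd⟩
  -- key inductive inequality
  have key : ∀ k ≤ Fintype.card α, γ * g Finset.univ ≤ h (R.H k) + γ * g ((R.H k)ᶜ) := by
    intro k
    induction k with
    | zero =>
      intro _
      simp [R.H0, hhe]
    | succ k ih =>
      intro hk
      have hk' : k < Fintype.card α := hk
      have ihk := ih (le_of_lt hk')
      have hmem := R.mem k hk'
      simp only [Finset.mem_union, not_or] at hmem
      rcases R.step k hk' with ⟨hH, hG, hmrg⟩ | ⟨hG, hH, _⟩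
      · -- elt k added to H
        set e := R.elt k
        have hcompl : (R.H k)ᶜ = insert e ((R.H (k + 1))ᶜ) := by
          rw [hH]; ext x
          simp only [Finset.mem_compl, Finset.mem_insert]
          by_cases hx : x = e
          · subst hx; simp [hmem.1]
          · simp [hx]
        have hsub : R.G k ⊆ (R.H (k + 1))ᶜ := by
          rw [hH]
          intro x hx
          simp only [Finset.mem_compl, Finset.mem_insert]
          push_neg
          constructor
          · rintro rfl; exact hmem.2 hx
          · exact fun hxH => (Finset.disjoint_right.mp (hdisj k (le_of_lt hk')) hx) hxH
        have hun : R.G k ∪ (R.H (k + 1))ᶜ = (R.H (k + 1))ᶜ :=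
          Finset.union_eq_right.mpr hsub
        have hratio := hgγ (R.G k) ((R.H (k + 1))ᶜ) e
        rw [hun] at hratio
        -- h (H (k+1)) = h (H k) + marg h e (H k)
        have hhstep : h (R.H (k + 1)) = h (R.H k) + marg h e (R.H k) := by
          rw [hH, marg]; ring
        have hgstep : g ((R.H k)ᶜ) = marg g e ((R.H (k + 1))ᶜ) + g ((R.H (k + 1))ᶜ) := by
          rw [hcompl, marg]; ring
        have h3 : γ * g ((R.H k)ᶜ) = γ * marg g e ((R.H (k + 1))ᶜ) + γ * g ((R.H (k + 1))ᶜ) := by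
          rw [hgstep]; ring
        linarith [ihk, hratio, hmrg, hhstep, h3]
      · rw [hH]; exact ihk
  intro k hk S
  have hkey := key k hk
  have hmono : g Sᶜ ≤ g Finset.univ := hgm (Finset.subset_univ _)
  have hgc : 0 ≤ g ((R.H k)ᶜ) := hg0 _
  constructor
  · have hγinv : (0:ℝ) < 1 / γ := by positivity
    have h1 : γ * g Sᶜ ≤ h (R.H k) + γ * g ((R.H k)ᶜ) := by nlinarith
    have h2 : γ * g Sᶜ ≤ h (R.H k) + g ((R.H k)ᶜ) := by nlinarith
    calc g Sᶜ = (1 / γ) * (γ * g Sᶜ) := by field_simp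
      _ ≤ (1 / γ) * (h (R.H k) + g ((R.H k)ᶜ)) := by
          exact mul_le_mul_of_nonneg_left h2 (le_of_lt hγinv)
  · rfl

end IncDec
end
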